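/- Let G ⊆ ℂ be open, f holomorphic on G, Γ a positively oriented circle whose closed disc lies in G, and c₁,…,c_n, c points inside Γ. Define Δⁿf via the contour integral Δⁿf(z₁,…,z_{n+1}) = (1/(2πi))∮_Γ f(ξ)/∏_{k}(ξ−z_k) dξ. Then Δⁿf(c₁,…,c_{n−1},c,c) equals the derivative at c of the function w ↦ Δ^{n−1}f(c₁,…,c_{n−1},w). -/

import Mathlib

open Finset Metric

private lemma aux1 (A B X : ℂ) : A / (B * X) = A / B * X⁻¹ := by
  rw [← div_div, div_eq_mul_inv]

private lemma aux2 (A B X : ℂ) : A / (B * X * X) = A / B * (X ^ 2)⁻¹ := by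
  rw [mul_assoc, ← sq, ← div_div, div_eq_mul_inv]

/-- With a repeated last node: `Δⁿf(c₁,…,c_{n−1},c,c)` equals the derivative at `c` of
`w ↦ Δ^{n−1}f(c₁,…,c_{n−1},w)`. -/
theorem stmt10 (G : Set ℂ) (hG : IsOpen G) (f : ℂ → ℂ) (hf : DifferentiableOn ℂ f G)
    (m : ℕ) (w : ℂ) (R : ℝ) (hR : 0 < R) (hsub : closedBall w R ⊆ G)
    (a : Fin m → ℂ) (ha : ∀ k, a k ∈ ball w R)
    (c : ℂ) (hc : c ∈ ball w R) :
    (2 * Real.pi * Complex.I)⁻¹ •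
        (∮ ξ in C(w, R), f ξ / ((∏ k : Fin m, (ξ - a k)) * (ξ - c) * (ξ - c)))
      = deriv (fun z : ℂ =>
          (2 * Real.pi * Complex.I)⁻¹ •
            (∮ ξ in C(w, R), f ξ / ((∏ k : Fin m, (ξ - a k)) * (ξ - z)))) c := by
  classical
  set P : ℂ → ℂ := fun ξ => ∏ k : Fin m, (ξ - a k) with hPdef
  set γ : ℝ → ℂ := fun θ => circleMap w R θ with hγdef
  have hsph : ∀ θ : ℝ, γ θ ∈ sphere w R := fun θ => by
    simpa [hγdef, abs_of_pos hR] using circleMap_mem_sphere' w R θ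
  have hsphG : ∀ θ : ℝ, γ θ ∈ G := fun θ => hsub (sphere_subset_closedBall (hsph θ))
  -- points of the sphere differ from points of the ball
  have hne : ∀ ξ ∈ sphere w R, ∀ z ∈ ball w R, ξ - z ≠ 0 := by
    intro ξ hξ z hz
    refine sub_ne_zero.2 fun h => ?_
    rw [mem_sphere] at hξ
    rw [mem_ball] at hz
    rw [h] at hξ
    exact absurd hξ (ne_of_lt hz)
  have hPne : ∀ ξ ∈ sphere w R, P ξ ≠ 0 := by
    intro ξ hξ
    exact Finset.prod_ne_zero_iff.2 fun k _ => hne ξ hξ (a k) (ha k)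
  -- the fixed part of the integrand and its bound on the sphere
  set Q : ℂ → ℂ := fun ξ => f ξ / P ξ with hQdef
  have hfc : ContinuousOn f (closedBall w R) := (hf.continuousOn).mono hsub
  have hQc : ContinuousOn Q (sphere w R) := by
    apply ContinuousOn.div (hfc.mono sphere_subset_closedBall)
    · exact (continuousOn_finset_prod _ fun k _ =>
        (continuousOn_id.sub continuousOn_const))
    · exact hPne
  obtain ⟨M, hM⟩ := (isCompact_sphere w R).exists_bound_of_continuousOn hQc
  set C : ℝ := max M 0 with hCdef
  have hMC : ∀ ξ ∈ sphere w R, ‖Q ξ‖ ≤ C := fun ξ hξ => le_max_of_le_left (hM ξ hξ)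
  have hC0 : 0 ≤ C := le_max_right _ _
  -- radius of locality
  set ε : ℝ := (R - dist c w) / 2 with hεdef
  have hε : 0 < ε := by
    have := mem_ball.1 hc
    simp only [hεdef]
    linarith
  have hball : ∀ z ∈ ball c ε, z ∈ ball w R := by
    intro z hz
    have h1 : dist z c < ε := mem_ball.1 hz
    have h2 : dist c w < R := mem_ball.1 hc
    have : dist z w ≤ dist z c + dist c w := dist_triangle z c w
    rw [mem_ball]
    simp only [hεdef] at h1
    linarith
  have hfar : ∀ (θ : ℝ), ∀ z ∈ ball c ε, ε ≤ ‖γ θ - z‖ := by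
    intro θ z hz
    have h1 : dist z c < ε := mem_ball.1 hz
    have h2 : dist (γ θ) w = R := mem_sphere.1 (hsph θ)
    have h3 : dist (γ θ) w ≤ dist (γ θ) z + dist z c + dist c w :=
      (dist_triangle (γ θ) z w).trans (by linarith [dist_triangle z c w])
    have : ‖γ θ - z‖ = dist (γ θ) z := (dist_eq_norm _ _).symm
    rw [this]
    simp only [hεdef] at h1 ⊢
    linarith
  -- the parametrized integrand
  set F : ℂ → ℝ → ℂ := fun z θ => deriv (circleMap w R) θ • (Q (γ θ) * (γ θ - z)⁻¹)
    with hFdef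
  set F' : ℂ → ℝ → ℂ := fun z θ => deriv (circleMap w R) θ • (Q (γ θ) * ((γ θ - z) ^ 2)⁻¹)
    with hF'def
  have hQγ : Continuous fun θ => Q (γ θ) :=
    hQc.comp_continuous (continuous_circleMap w R) hsph
  have hKc : Continuous fun θ => deriv (circleMap w R) θ := by
    simp only [deriv_circleMap]
    exact (continuous_circleMap 0 R).mul continuous_const
  have hKnorm : ∀ θ : ℝ, ‖deriv (circleMap w R) θ‖ = R := by
    intro θ
    simp [deriv_circleMap, norm_circleMap_zero, abs_of_pos hR]
  have hFcont : ∀ z ∈ ball w R, Continuous (F z) := by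
    intro z hz
    apply hKc.smul
    apply hQγ.mul
    apply Continuous.inv₀
    · exact ((continuous_circleMap w R).sub continuous_const)
    · exact fun θ => hne (γ θ) (hsph θ) z hz
  -- main differentiation under the integral
  have key :
      HasDerivAt (fun z : ℂ => ∫ θ in (0:ℝ)..2 * Real.pi, F z θ)
        (∫ θ in (0:ℝ)..2 * Real.pi, F' c θ) c := by
    refine (intervalIntegral.hasDerivAt_integral_of_dominated_loc_of_deriv_le (ball_mem_nhds c hε)
      (F := F) (F' := F') (bound := fun _ => R * (C * (ε ^ 2)⁻¹)) ?_ ?_ ?_ ?_ ?_ ?_).2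
    · filter_upwards [isOpen_ball.eventually_mem hc] with z hz
      exact (hFcont z hz).aestronglyMeasurable
    · exact (hFcont c hc).intervalIntegrable 0 (2 * Real.pi)
    · apply Continuous.aestronglyMeasurable
      apply hKc.smul
      apply hQγ.mul
      apply Continuous.inv₀
      · exact (((continuous_circleMap w R).sub continuous_const).pow 2)
      · exact fun θ => pow_ne_zero 2 (hne (γ θ) (hsph θ) c hc)
    · refine Filter.Eventually.of_forall fun θ _ z hz => ?_
      have h1 : ε ≤ ‖γ θ - z‖ := hfar θ z hz
      have h2 : ‖Q (γ θ)‖ ≤ C := hMC _ (hsph θ)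
      calc ‖F' z θ‖ = R * (‖Q (γ θ)‖ * (‖γ θ - z‖ ^ 2)⁻¹) := by
            simp only [hF'def, norm_smul, hKnorm, norm_mul, norm_inv, norm_pow]
        _ ≤ R * (C * (ε ^ 2)⁻¹) := by
            have hpow : ε ^ 2 ≤ ‖γ θ - z‖ ^ 2 := pow_le_pow_left₀ hε.le h1 2
            have hinv : (‖γ θ - z‖ ^ 2)⁻¹ ≤ (ε ^ 2)⁻¹ :=
              inv_anti₀ (by positivity) hpow
            have hmul : ‖Q (γ θ)‖ * (‖γ θ - z‖ ^ 2)⁻¹ ≤ C * (ε ^ 2)⁻¹ :=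
              mul_le_mul h2 hinv (by positivity) hC0
            exact mul_le_mul_of_nonneg_left hmul hR.le
    · exact intervalIntegrable_const
    · refine Filter.Eventually.of_forall fun θ _ z hz => ?_
      have hzne : γ θ - z ≠ 0 := hne (γ θ) (hsph θ) z (hball z hz)
      have h0 : HasDerivAt (fun z : ℂ => γ θ - z) (-1) z := by
        simpa using (hasDerivAt_id z).const_sub (γ θ)
      have h1 := (h0.inv hzne).const_mul (Q (γ θ))
      have h2 := h1.const_smul (deriv (circleMap w R) θ)
      convert h2 using 1
      · rfl
      simp only [hF'def]
      rw [neg_neg, div_eq_mul_inv, one_mul]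
  -- assemble
  have keysmul := key.const_smul ((2 * Real.pi * Complex.I)⁻¹ : ℂ)
  have hL : ∀ z : ℂ, (∮ ξ in C(w, R), f ξ / ((∏ k : Fin m, (ξ - a k)) * (ξ - z)))
      = ∫ θ in (0:ℝ)..2 * Real.pi, F z θ := by
    intro z
    simp only [circleIntegral]
    apply intervalIntegral.integral_congr
    intro θ _
    show deriv (circleMap w R) θ • (f (circleMap w R θ) /
        ((∏ k : Fin m, (circleMap w R θ - a k)) * (circleMap w R θ - z)))
      = deriv (circleMap w R) θ • (Q (γ θ) * (γ θ - z)⁻¹)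
    congr 1
    exact aux1 (f (γ θ)) (P (γ θ)) (γ θ - z)
  have hfun : (fun z : ℂ => (2 * Real.pi * Complex.I)⁻¹ •
      (∮ ξ in C(w, R), f ξ / ((∏ k : Fin m, (ξ - a k)) * (ξ - z))))
      = fun z : ℂ => (2 * Real.pi * Complex.I)⁻¹ •
        ∫ θ in (0:ℝ)..2 * Real.pi, F z θ := by
    funext z
    rw [hL z]
  rw [hfun, HasDerivAt.deriv (f := fun z : ℂ => (2 * Real.pi * Complex.I)⁻¹ •
      ∫ θ in (0:ℝ)..2 * Real.pi, F z θ) keysmul]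
  congr 1
  simp only [circleIntegral]
  apply intervalIntegral.integral_congr
  intro θ _
  show deriv (circleMap w R) θ • (f (circleMap w R θ) /
      ((∏ k : Fin m, (circleMap w R θ - a k)) * (circleMap w R θ - c) * (circleMap w R θ - c)))
    = deriv (circleMap w R) θ • (Q (γ θ) * ((γ θ - c) ^ 2)⁻¹)
  congr 1
  exact aux2 (f (γ θ)) (P (γ θ)) (γ θ - c)
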